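/- arXiv:1408.4214 — 2 statements merged into one kernel-verified Lean document; each statement's English description precedes it below -/
import Mathlib

section
/- For every $\rho > 0$ there exists a constant $C_2 > 0$ such that for every triangle $T \subseteq \mathbb{R}^2$ with diameter $h$ that contains a ball of radius $\rho h$, every edge $e$ of $T$, and every function $v : \mathbb{R}^2 \to \mathbb{R}$ that is continuously differentiable on an open neighborhood of $T$, one has $\int_e v^2 \, d\mathcal{H}^1 \le C_2 \left( h^{-1} \int_T v^2 \, dx + h \int_T \lVert \nabla v \rVert^2 \, dx \right)$. -/
open MeasureTheory
open scoped ENNReal NNReal Pointwise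

noncomputable section TraceAux

local notation "E2" => EuclideanSpace ℝ (Fin 2)

/-! ### Product coordinates on `EuclideanSpace ℝ (Fin 2)` -/

def eqE : (ℝ × ℝ) ≃ᵐ E2 :=
  MeasurableEquiv.finTwoArrow.symm.trans (MeasurableEquiv.toLp 2 (Fin 2 → ℝ))

lemma eqE_mp : MeasurePreserving (eqE) volume volume :=
  ((EuclideanSpace.volume_preserving_symm_measurableEquiv_toLp (Fin 2)).symm _).comp
    ((volume_preserving_finTwoArrow ℝ).symm _)

lemma eqE_apply0 (q : ℝ × ℝ) : eqE q 0 = q.1 := rfl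
lemma eqE_apply1 (q : ℝ × ℝ) : eqE q 1 = q.2 := rfl

def pr (i : Fin 2) : E2 →L[ℝ] ℝ := EuclideanSpace.proj (𝕜 := ℝ) i

lemma pr_apply (i : Fin 2) (x : E2) : pr i x = x i := rfl

lemma coord_measurable (i : Fin 2) : Measurable (fun x : E2 => x i) :=
  (pr i).continuous.measurable

lemma box_measurable {s t : Set ℝ} (hs : MeasurableSet s) (ht : MeasurableSet t) :
    MeasurableSet {x : E2 | x 0 ∈ s ∧ x 1 ∈ t} :=
  ((coord_measurable 0) hs).inter ((coord_measurable 1) ht)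

lemma eqE_preimage_box (s t : Set ℝ) :
    eqE ⁻¹' {x : E2 | x 0 ∈ s ∧ x 1 ∈ t} = s ×ˢ t := by
  ext q; simp [eqE_apply0, eqE_apply1, Set.mem_prod]

lemma vol_box {s t : Set ℝ} (hs : MeasurableSet s) (ht : MeasurableSet t) :
    volume {x : E2 | x 0 ∈ s ∧ x 1 ∈ t} = volume s * volume t := by
  rw [← eqE_mp.measure_preimage (box_measurable hs ht).nullMeasurableSet, eqE_preimage_box,
    Measure.volume_eq_prod, Measure.prod_prod]

lemma restrict_box_map {s t : Set ℝ} (hs : MeasurableSet s) (ht : MeasurableSet t) :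
    (volume : Measure E2).restrict {x : E2 | x 0 ∈ s ∧ x 1 ∈ t}
      = Measure.map eqE (((volume : Measure ℝ).restrict s).prod ((volume : Measure ℝ).restrict t)) := by
  rw [Measure.prod_restrict, ← eqE_preimage_box s t,
    ← Measure.restrict_map eqE.measurable (box_measurable hs ht)]
  congr 1
  rw [show ((volume : Measure ℝ).prod volume) = (volume : Measure (ℝ × ℝ)) from
    (Measure.volume_eq_prod ℝ ℝ).symm, eqE_mp.map_eq]

lemma box_fubini {s t : Set ℝ} (hs : MeasurableSet s) (ht : MeasurableSet t) (f : E2 → ℝ≥0∞)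
    (hf : AEMeasurable (fun q : ℝ × ℝ => f (eqE q))
      (((volume : Measure ℝ).restrict s).prod ((volume : Measure ℝ).restrict t))) :
    ∫⁻ x in {x : E2 | x 0 ∈ s ∧ x 1 ∈ t}, f x
      = ∫⁻ a in s, ∫⁻ b in t, f (eqE (a, b)) := by
  rw [show (∫⁻ x in {x : E2 | x 0 ∈ s ∧ x 1 ∈ t}, f x)
      = ∫⁻ x, f x ∂((volume : Measure E2).restrict {x : E2 | x 0 ∈ s ∧ x 1 ∈ t}) from rfl,
    restrict_box_map hs ht, (eqE.measurableEmbedding).lintegral_map, lintegral_prod _ hf]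

/-! ### Hausdorff measure on a segment -/

lemma gamma_eq_lineMap (a b : E2) :
    (fun θ : ℝ => a + θ • (b - a)) = fun θ => AffineMap.lineMap a b θ := by
  funext θ; simp [AffineMap.lineMap_apply_module]; module

lemma gamma_cont (a b : E2) : Continuous (fun θ : ℝ => a + θ • (b - a)) := by fun_prop

lemma seg_measure (a b : E2) :
    μH[1].restrict (segment ℝ a b)
      = (nndist a b : ℝ≥0∞) • Measure.map (fun θ : ℝ => a + θ • (b - a))
          ((volume : Measure ℝ).restrict (Set.Icc 0 1)) := by
  rw [gamma_eq_lineMap]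
  ext X hX
  rw [Measure.restrict_apply hX, Measure.smul_apply,
    Measure.map_apply (AffineMap.lineMap_continuous.measurable) hX, Measure.restrict_apply
      (hX.preimage AffineMap.lineMap_continuous.measurable)]
  rw [segment_eq_image_lineMap ℝ a b, Set.inter_comm, ← Set.image_inter_preimage, Set.inter_comm,
    MeasureTheory.hausdorffMeasure_lineMap_image, MeasureTheory.hausdorffMeasure_real]
  rw [ENNReal.smul_def]

lemma gamma_emb (a b : E2) (hab : a ≠ b) :
    MeasurableEmbedding (fun θ : ℝ => a + θ • (b - a)) := by
  have h1 : Topology.IsClosedEmbedding (fun θ : ℝ => θ • (b - a)) := by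
    have := LinearMap.isClosedEmbedding_of_injective (𝕜 := ℝ)
      (f := LinearMap.toSpanSingleton ℝ E2 (b - a))
      (by rw [LinearMap.ker_toSpanSingleton ℝ (sub_ne_zero.2 (Ne.symm hab))])
    simpa [LinearMap.toSpanSingleton, LinearMap.smulRight] using this
  exact ((Homeomorph.addLeft a).isClosedEmbedding.comp h1).measurableEmbedding

lemma seg_lintegral (a b : E2) (hab : a ≠ b) (f : E2 → ℝ≥0∞) :
    ∫⁻ x in segment ℝ a b, f x ∂μH[1]
      = (nndist a b : ℝ≥0∞) * ∫⁻ θ in Set.Icc (0:ℝ) 1, f (a + θ • (b - a)) := by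
  rw [show (∫⁻ x in segment ℝ a b, f x ∂μH[1])
      = ∫⁻ x, f x ∂(μH[1].restrict (segment ℝ a b)) from rfl,
    seg_measure, lintegral_smul_measure, (gamma_emb a b hab).lintegral_map, smul_eq_mul]

end TraceAux

local notation "E2" => EuclideanSpace ℝ (Fin 2)

set_option maxHeartbeats 1600000 in
theorem trace_core (ρ h : ℝ) (hρ : 0 < ρ) (p a b : EuclideanSpace ℝ (Fin 2))
    (hab : a ≠ b)
    (T : Set (EuclideanSpace ℝ (Fin 2)))
    (hT : T = convexHull ℝ {a, b, p})
    (hh : h = Metric.diam T)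
    (hhpos : 0 < h)
    (hball : ∃ z, Metric.closedBall z (ρ * h) ⊆ T)
    (v : EuclideanSpace ℝ (Fin 2) → ℝ)
    (U : Set (EuclideanSpace ℝ (Fin 2))) (hUopen : IsOpen U) (hTU : T ⊆ U)
    (hv : ContDiffOn ℝ 1 v U) :
    (∫ x in segment ℝ a b, (v x) ^ 2 ∂μH[1]) ≤
      (3 / ρ ^ 2) * (h⁻¹ * (∫ x in T, (v x) ^ 2) + h * ∫ x in T, ‖gradient v x‖ ^ 2) := by
  have hconv : Convex ℝ T := hT ▸ convex_convexHull ℝ _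
  have hcpt : IsCompact T := hT ▸ Set.Finite.isCompact_convexHull ℝ
    (((Set.finite_singleton p).insert b).insert a)
  have hbdd : Bornology.IsBounded T := hcpt.isBounded
  have hTmeas : MeasurableSet T := hcpt.isClosed.measurableSet
  have haT : a ∈ T := hT ▸ subset_convexHull ℝ _ (by simp)
  have hbT : b ∈ T := hT ▸ subset_convexHull ℝ _ (by simp)
  have hpT : p ∈ T := hT ▸ subset_convexHull ℝ _ (by simp)
  set u : E2 := a - p with hu
  set c : E2 := b - a with hc
  set D : ℝ := c 0 * u 1 - c 1 * u 0 with hD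
  -- membership facts
  have hγT : ∀ s ∈ Set.Icc (0:ℝ) 1, a + s • c ∈ T := by
    intro s hs
    have he : a + s • c = (1 - s) • a + s • b := by rw [hc]; module
    rw [he]; exact hconv haT hbT (by linarith [hs.2]) hs.1 (by ring)
  have hΦmem : ∀ s t : ℝ, s ∈ Set.Icc (0:ℝ) 1 → t ∈ Set.Icc (0:ℝ) 1 →
      p + (t • u + (s * t) • c) ∈ T := by
    intro s t hs ht
    have he : p + (t • u + (s * t) • c) = (1 - t) • p + t • ((1 - s) • a + s • b) := by
      rw [hu, hc]; module
    rw [he]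
    exact hconv hpT (hconv haT hbT (by linarith [hs.2]) hs.1 (by ring))
      (by linarith [ht.2]) ht.1 (by ring)
  have hwnorm : ∀ s ∈ Set.Icc (0:ℝ) 1, ‖u + s • c‖ ≤ h := by
    intro s hs
    have he : u + s • c = (a + s • c) - p := by rw [hu]; module
    rw [he, ← dist_eq_norm, hh]
    exact Metric.dist_le_diam_of_mem hbdd (hγT s hs) hpT
  -- analytic facts about v
  have hdiff : ∀ y ∈ U, HasFDerivAt v (fderiv ℝ v y) y := fun y hy =>
    ((hv.differentiableOn one_ne_zero y hy).differentiableAt (hUopen.mem_nhds hy)).hasFDerivAt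
  have hfdcont : ContinuousOn (fderiv ℝ v) U := hv.continuousOn_fderiv_of_isOpen hUopen le_rfl
  have hvcont : ContinuousOn v U := hv.continuousOn
  have hgradnorm : ∀ y, ‖fderiv ℝ v y‖ = ‖gradient v y‖ := by
    intro y
    rw [show gradient v y = (InnerProductSpace.toDual ℝ _).symm (fderiv ℝ v y) from rfl]
    rw [LinearIsometryEquiv.norm_map]
  have hgradcont : ContinuousOn (fun y => gradient v y) U := by
    have : (fun y => gradient v y)
        = fun y => (InnerProductSpace.toDual ℝ E2).symm (fderiv ℝ v y) := rfl
    rw [this]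
    exact (InnerProductSpace.toDual ℝ E2).symm.continuous.comp_continuousOn hfdcont
  set F : E2 → ℝ := fun y => 3 * (v y) ^ 2 + h ^ 2 * ‖gradient v y‖ ^ 2 with hF
  have hFnonneg : ∀ y, 0 ≤ F y := by intro y; positivity
  have hFcont : ContinuousOn F U :=
    (continuousOn_const.mul (hvcont.pow 2)).add
      (continuousOn_const.mul ((hgradcont.norm).pow 2))
  -- the parametrization and its derivative
  set Φ : E2 → E2 := fun x => p + (x 1 • u + (x 0 * x 1) • c) with hΦ
  set f' : E2 → (E2 →L[ℝ] E2) := fun x =>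
    ((pr 1).smulRight u + ((x 0 • pr 1 + x 1 • pr 0).smulRight c)) with hf'
  have hΦderiv : ∀ x : E2, HasFDerivAt Φ (f' x) x := by
    intro x
    have h1 : HasFDerivAt (fun y : E2 => y 1 • u) ((pr 1).smulRight u) x :=
      ((pr 1).hasFDerivAt).smul_const u
    have h0 : HasFDerivAt (fun y : E2 => y 0 * y 1)
        ((fun y : E2 => y 0) x • (pr 1) + (fun y : E2 => y 1) x • (pr 0)) x :=
      HasFDerivAt.mul ((pr 0).hasFDerivAt) ((pr 1).hasFDerivAt)
    have h2 : HasFDerivAt (fun y : E2 => (y 0 * y 1) • c)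
        (((fun y : E2 => y 0) x • (pr 1) + (fun y : E2 => y 1) x • (pr 0)).smulRight c) x :=
      h0.smul_const c
    exact (h1.add h2).const_add p
  have hdet : ∀ x : E2, (f' x).det = x 1 * D := by
    intro x
    have hcoe : ∀ (f : E2 →L[ℝ] E2), f.det = LinearMap.det (f : E2 →ₗ[ℝ] E2) := fun f => rfl
    rw [hf', hcoe, ← LinearMap.det_toMatrix (EuclideanSpace.basisFun (Fin 2) ℝ).toBasis,
      Matrix.det_fin_two]
    simp [LinearMap.toMatrix_apply, EuclideanSpace.basisFun_apply, pr_apply,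
      EuclideanSpace.single_apply]
    rw [hD, hu, hc]; ring
  -- area lower bound
  have hDlow : ρ ^ 2 * h ^ 2 ≤ |D| := by
    obtain ⟨z, hz⟩ := hball
    have hrpos : 0 < ρ * h := by positivity
    -- the inscribed square gives a lower bound on the volume of `T`
    have hsq : {x : E2 | x 0 ∈ Set.Icc (z 0 - ρ*h/2) (z 0 + ρ*h/2)
        ∧ x 1 ∈ Set.Icc (z 1 - ρ*h/2) (z 1 + ρ*h/2)} ⊆ Metric.closedBall z (ρ*h) := by
      rintro x ⟨h0, h1⟩
      rw [Metric.mem_closedBall, EuclideanSpace.dist_eq, Fin.sum_univ_two]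
      have e0 : dist (x 0) (z 0) ≤ ρ*h/2 := by
        rw [Real.dist_eq, abs_le]; exact ⟨by linarith [h0.1], by linarith [h0.2]⟩
      have e1 : dist (x 1) (z 1) ≤ ρ*h/2 := by
        rw [Real.dist_eq, abs_le]; exact ⟨by linarith [h1.1], by linarith [h1.2]⟩
      calc Real.sqrt (dist (x 0) (z 0) ^ 2 + dist (x 1) (z 1) ^ 2)
          ≤ Real.sqrt ((ρ*h) ^ 2) := Real.sqrt_le_sqrt (by
            nlinarith [dist_nonneg (x := x 0) (y := z 0), dist_nonneg (x := x 1) (y := z 1)])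
        _ = ρ*h := Real.sqrt_sq hrpos.le
    have hvol1 : ENNReal.ofReal ((ρ*h) ^ 2) ≤ volume T := by
      have := measure_mono (μ := (volume : Measure (EuclideanSpace ℝ (Fin 2)))) (hsq.trans hz)
      rw [vol_box measurableSet_Icc measurableSet_Icc, Real.volume_Icc, Real.volume_Icc] at this
      calc ENNReal.ofReal ((ρ*h) ^ 2)
          = ENNReal.ofReal (z 0 + ρ*h/2 - (z 0 - ρ*h/2)) * ENNReal.ofReal (z 1 + ρ*h/2 - (z 1 - ρ*h/2)) := by
            rw [← ENNReal.ofReal_mul (by linarith)]; ring_nf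
        _ ≤ volume T := this
    -- `T` is contained in an affine image of the unit square
    set L : E2 →L[ℝ] E2 := f' (EuclideanSpace.single 1 1) with hL
    have hL1 : (EuclideanSpace.single (1 : Fin 2) (1:ℝ)) 1 = (1:ℝ) := by
      simp [EuclideanSpace.single_apply]
    have hL0 : (EuclideanSpace.single (1 : Fin 2) (1:ℝ)) 0 = (0:ℝ) := by
      simp [EuclideanSpace.single_apply]
    have hLdet : LinearMap.det (L : E2 →ₗ[ℝ] E2) = D := by
      calc LinearMap.det (L : E2 →ₗ[ℝ] E2) = (f' (EuclideanSpace.single 1 1)).det := rfl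
        _ = D := by rw [hdet, hL1, one_mul]
    have hLapp : ∀ w : E2, L w = w 1 • u + w 0 • c := by
      intro w
      rw [hL, hf']
      simp [ContinuousLinearMap.smulRight_apply, pr_apply, hL0, hL1]
    set B : Set E2 := {x : E2 | x 0 ∈ Set.Icc (0:ℝ) 1 ∧ x 1 ∈ Set.Icc (0:ℝ) 1} with hB
    have hBconv : Convex ℝ B := by
      have : B = (pr 0) ⁻¹' (Set.Icc (0:ℝ) 1) ∩ (pr 1) ⁻¹' (Set.Icc (0:ℝ) 1) := rfl
      rw [this]
      exact ((convex_Icc (0:ℝ) 1).linear_preimage ((pr 0) : E2 →ₗ[ℝ] ℝ)).inter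
        ((convex_Icc (0:ℝ) 1).linear_preimage ((pr 1) : E2 →ₗ[ℝ] ℝ))
    have hTB : T ⊆ (fun y => p + L y) '' B := by
      rw [hT]
      apply convexHull_min ?_ (by
        have himg : (fun y => p + L y) '' B = (fun x => p + x) '' ((L : E2 → E2) '' B) := by
          rw [← Set.image_comp]; rfl
        rw [himg]
        exact (hBconv.is_linear_image ⟨L.map_add, L.map_smul⟩).translate p)
      rintro x hx
      simp only [Set.mem_insert_iff, Set.mem_singleton_iff] at hx
      rcases hx with rfl | rfl | rfl
      · refine ⟨EuclideanSpace.single 1 1, ⟨by rw [hL0]; exact Set.mem_Icc.2 ⟨le_rfl, zero_le_one⟩,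
          by rw [hL1]; exact Set.mem_Icc.2 ⟨zero_le_one, le_rfl⟩⟩, ?_⟩
        show p + L (EuclideanSpace.single 1 1) = _
        rw [hLapp, hL0, hL1, hu]; module
      · refine ⟨eqE (1, 1), ⟨by rw [eqE_apply0]; exact Set.mem_Icc.2 ⟨zero_le_one, le_rfl⟩,
          by rw [eqE_apply1]; exact Set.mem_Icc.2 ⟨zero_le_one, le_rfl⟩⟩, ?_⟩
        show p + L (eqE (1, 1)) = _
        rw [hLapp, eqE_apply0, eqE_apply1, hu, hc]; module
      · refine ⟨0, ⟨by simp [Set.mem_Icc], by simp [Set.mem_Icc]⟩, ?_⟩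
        show _ + L 0 = _
        rw [hLapp]; simp
    have hvol2 : volume T ≤ ENNReal.ofReal |D| := by
      calc volume T ≤ volume ((fun y => p + L y) '' B) := measure_mono hTB
        _ = volume ((fun x => p + x) '' ((L : E2 → E2) '' B)) := by rw [← Set.image_comp]; rfl
        _ = volume ((L : E2 → E2) '' B) := by
            rw [show (fun x : E2 => p + x) '' ((L : E2 → E2) '' B) = p +ᵥ ((L : E2 → E2) '' B) from
              by rw [← Set.image_vadd]; rfl]
            exact measure_vadd volume p _
        _ = ENNReal.ofReal |LinearMap.det (L : E2 →ₗ[ℝ] E2)| * volume B := by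
            rw [← Measure.addHaar_image_linearMap volume (L : E2 →ₗ[ℝ] E2) B]; rfl
        _ = ENNReal.ofReal |D| := by
            rw [hLdet, hB, vol_box measurableSet_Icc measurableSet_Icc, Real.volume_Icc]
            norm_num
    have := hvol1.trans hvol2
    rw [ENNReal.ofReal_le_ofReal_iff (abs_nonneg _)] at this
    calc ρ ^ 2 * h ^ 2 = (ρ*h)^2 := by ring
      _ ≤ |D| := this
  have hDpos : 0 < |D| := lt_of_lt_of_le (by positivity) hDlow
  have hDne : D ≠ 0 := by simpa [abs_pos] using hDpos
  -- injectivity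
  set S : Set E2 := {x : E2 | x 0 ∈ Set.Icc (0:ℝ) 1 ∧ x 1 ∈ Set.Ioc (0:ℝ) 1} with hSdef
  have hSmeas : MeasurableSet S := box_measurable measurableSet_Icc measurableSet_Ioc
  have hinj : Set.InjOn Φ S := by
    intro x hx y hy hxy
    rw [hΦ] at hxy
    simp only at hxy
    have heq : x 1 • u + (x 0 * x 1) • c = y 1 • u + (y 0 * y 1) • c := by
      have := hxy
      exact add_left_cancel this
    have e0 := congrArg (fun w : E2 => w 0) heq
    have e1 := congrArg (fun w : E2 => w 1) heq
    simp only [PiLp.add_apply, PiLp.smul_apply, smul_eq_mul] at e0 e1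
    -- deduce the coefficients coincide, using `D ≠ 0`
    have hα : x 1 = y 1 := by
      have h1 : (x 1 - y 1) * u 0 + (x 0 * x 1 - y 0 * y 1) * c 0 = 0 := by linear_combination e0
      have h2 : (x 1 - y 1) * u 1 + (x 0 * x 1 - y 0 * y 1) * c 1 = 0 := by linear_combination e1
      have : (x 1 - y 1) * D = 0 := by rw [hD]; linear_combination c 0 * h2 - c 1 * h1
      rcases mul_eq_zero.1 this with h | h
      · linarith
      · exact absurd h hDne
    have hβ : x 0 * x 1 = y 0 * y 1 := by
      have h1 : (x 1 - y 1) * u 0 + (x 0 * x 1 - y 0 * y 1) * c 0 = 0 := by linear_combination e0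
      have h2 : (x 1 - y 1) * u 1 + (x 0 * x 1 - y 0 * y 1) * c 1 = 0 := by linear_combination e1
      have : (x 0 * x 1 - y 0 * y 1) * D = 0 := by rw [hD]; linear_combination u 1 * h1 - u 0 * h2
      rcases mul_eq_zero.1 this with h | h
      · linarith
      · exact absurd h hDne
    have hx1 : (0:ℝ) < x 1 := hx.2.1
    have hβ' : x 0 = y 0 := by
      rw [hα] at hβ
      have hy1 : x 1 = y 1 := hα
      exact mul_right_cancel₀ (by rw [← hα]; exact hx1.ne') hβ
    ext i
    fin_cases i
    · exact hβ'
    · exact hα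
  have hΦST : Φ '' S ⊆ T := by
    rintro - ⟨x, hx, rfl⟩
    exact hΦmem (x 0) (x 1) hx.1 (Set.Ioc_subset_Icc_self hx.2)
  -- the fundamental theorem of calculus step
  have key1 : ∀ s ∈ Set.Icc (0:ℝ) 1,
      ENNReal.ofReal ((v (a + s • c)) ^ 2)
        ≤ ∫⁻ t in Set.Ioc (0:ℝ) 1, ENNReal.ofReal (t * F (p + (t • u + (s * t) • c))) := by
    intro s hs
    set w : E2 := u + s • c with hw
    set ψ : ℝ → E2 := fun t => p + (t • u + (s * t) • c) with hψdef
    have hψT : ∀ t ∈ Set.Icc (0:ℝ) 1, ψ t ∈ T := fun t ht => hΦmem s t hs ht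
    have hψd : ∀ t : ℝ, HasDerivAt ψ w t := by
      intro t
      have h1 : HasDerivAt (fun τ : ℝ => τ • u) ((1:ℝ) • u) t := (hasDerivAt_id t).smul_const u
      have h2 : HasDerivAt (fun τ : ℝ => (s * τ) • c) ((s * 1) • c) t :=
        ((hasDerivAt_id t).const_mul s).smul_const c
      have h3 := (h1.add h2).const_add p
      refine h3.congr_deriv ?_
      rw [hw]; simp
    have hVd : ∀ t ∈ Set.Icc (0:ℝ) 1, HasDerivAt (fun τ => v (ψ τ)) (fderiv ℝ v (ψ t) w) t :=
      fun t ht => (hdiff (ψ t) (hTU (hψT t ht))).comp_hasDerivAt t (hψd t)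
    set g' : ℝ → ℝ := fun t =>
      2 * t ^ 1 * (v (ψ t)) ^ 2 + t ^ 2 * (2 * (v (ψ t)) ^ 1 * fderiv ℝ v (ψ t) w) with hg'
    have hgd : ∀ t ∈ Set.uIcc (0:ℝ) 1, HasDerivAt (fun τ => τ ^ 2 * (v (ψ τ)) ^ 2) (g' t) t := by
      intro t ht
      rw [Set.uIcc_of_le zero_le_one] at ht
      have := (hasDerivAt_pow 2 t).mul ((hVd t ht).pow 2)
      exact this.congr_deriv (by simp only [hg', Pi.pow_apply]; norm_num)
    have hψcont : Continuous ψ := by fun_prop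
    have hψmaps : Set.MapsTo ψ (Set.Icc 0 1) U := fun t ht => hTU (hψT t ht)
    have hVcont : ContinuousOn (fun t => v (ψ t)) (Set.Icc 0 1) :=
      hvcont.comp hψcont.continuousOn hψmaps
    have hWcont : ContinuousOn (fun t => fderiv ℝ v (ψ t) w) (Set.Icc 0 1) :=
      (ContinuousLinearMap.apply ℝ ℝ w).continuous.comp_continuousOn
        (hfdcont.comp hψcont.continuousOn hψmaps)
    have hg'cont : ContinuousOn g' (Set.Icc 0 1) := by
      rw [hg']
      exact ((continuousOn_const.mul ((continuousOn_id.pow 1))).mul (hVcont.pow 2)).add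
        ((continuousOn_id.pow 2).mul
          ((continuousOn_const.mul (hVcont.pow 1)).mul hWcont))
    have hgint : IntervalIntegrable g' volume 0 1 := by
      apply ContinuousOn.intervalIntegrable
      rwa [Set.uIcc_of_le zero_le_one]
    have hftc := intervalIntegral.integral_eq_sub_of_hasDerivAt hgd hgint
    have hψ1 : ψ 1 = a + s • c := by
      show p + ((1:ℝ) • u + (s * 1) • c) = a + s • c
      rw [hu]; module
    have heval : (v (a + s • c)) ^ 2 = ∫ t in Set.Ioc (0:ℝ) 1, g' t := by
      rw [← intervalIntegral.integral_of_le zero_le_one, hftc]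
      rw [hψ1]; norm_num
    have hbnd : IntegrableOn (fun t => t * F (ψ t)) (Set.Ioc (0:ℝ) 1) volume :=
      ((continuousOn_id.mul ((hFcont.comp hψcont.continuousOn hψmaps))).integrableOn_compact
        isCompact_Icc).mono_set Set.Ioc_subset_Icc_self
    have hg'Ioc : IntegrableOn g' (Set.Ioc (0:ℝ) 1) volume :=
      (hg'cont.integrableOn_compact isCompact_Icc).mono_set Set.Ioc_subset_Icc_self
    have hpt : ∀ t ∈ Set.Ioc (0:ℝ) 1, g' t ≤ t * F (ψ t) := by
      intro t ht
      have ht0 : (0:ℝ) < t := ht.1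
      have ht1 : t ≤ 1 := ht.2
      have hWb : |fderiv ℝ v (ψ t) w| ≤ ‖gradient v (ψ t)‖ * h := by
        calc |fderiv ℝ v (ψ t) w| = ‖fderiv ℝ v (ψ t) w‖ := (Real.norm_eq_abs _).symm
          _ ≤ ‖fderiv ℝ v (ψ t)‖ * ‖w‖ := ContinuousLinearMap.le_opNorm _ _
          _ ≤ ‖gradient v (ψ t)‖ * h := by
              rw [hgradnorm]
              exact mul_le_mul_of_nonneg_left (hwnorm s hs) (norm_nonneg _)
      have hFval : F (ψ t) = 3 * (v (ψ t)) ^ 2 + h ^ 2 * ‖gradient v (ψ t)‖ ^ 2 := rfl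
      have h2VW : 2 * (v (ψ t)) * (fderiv ℝ v (ψ t) w)
          ≤ (v (ψ t)) ^ 2 + ‖gradient v (ψ t)‖ ^ 2 * h ^ 2 := by
        rcases abs_le.1 hWb with ⟨hWl, hWr⟩
        rcases le_or_gt 0 (v (ψ t)) with hV | hV
        · nlinarith [sq_nonneg (v (ψ t) - ‖gradient v (ψ t)‖ * h)]
        · nlinarith [sq_nonneg (v (ψ t) + ‖gradient v (ψ t)‖ * h)]
      have s1 : t ^ 2 * (2 * (v (ψ t)) * (fderiv ℝ v (ψ t) w))
          ≤ t ^ 2 * ((v (ψ t)) ^ 2 + ‖gradient v (ψ t)‖ ^ 2 * h ^ 2) :=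
        mul_le_mul_of_nonneg_left h2VW (sq_nonneg t)
      have s2 : t ^ 2 * ((v (ψ t)) ^ 2 + ‖gradient v (ψ t)‖ ^ 2 * h ^ 2)
          ≤ t * ((v (ψ t)) ^ 2 + ‖gradient v (ψ t)‖ ^ 2 * h ^ 2) := by
        apply mul_le_mul_of_nonneg_right _ (by positivity)
        nlinarith
      rw [hg', hFval]
      simp only [pow_one]
      nlinarith [s1, s2, mul_nonneg ht0.le (sq_nonneg (v (ψ t)))]
    have hreal : (v (a + s • c)) ^ 2 ≤ ∫ t in Set.Ioc (0:ℝ) 1, t * F (ψ t) := by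
      calc (v (a + s • c)) ^ 2 = ∫ t in Set.Ioc (0:ℝ) 1, g' t := heval
        _ ≤ ∫ t in Set.Ioc (0:ℝ) 1, t * F (ψ t) :=
            setIntegral_mono_on hg'Ioc hbnd measurableSet_Ioc hpt
    calc ENNReal.ofReal ((v (a + s • c)) ^ 2)
        ≤ ENNReal.ofReal (∫ t in Set.Ioc (0:ℝ) 1, t * F (ψ t)) :=
          ENNReal.ofReal_le_ofReal hreal
      _ = ∫⁻ t in Set.Ioc (0:ℝ) 1, ENNReal.ofReal (t * F (ψ t)) :=
          ofReal_integral_eq_lintegral_ofReal hbnd ((ae_restrict_iff' measurableSet_Ioc).2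
            (ae_of_all _ fun t ht => mul_nonneg ht.1.le (hFnonneg _)))
      _ = ∫⁻ t in Set.Ioc (0:ℝ) 1, ENNReal.ofReal (t * F (p + (t • u + (s * t) • c))) := rfl
  -- pass to Lebesgue integrals in `ℝ≥0∞`
  have hsegT : segment ℝ a b ⊆ T := hconv.segment_subset haT hbT
  have hsegcpt : IsCompact (segment ℝ a b) := by
    rw [segment_eq_image_lineMap]
    exact isCompact_Icc.image (AffineMap.lineMap_continuous)
  have hsegmeas : MeasurableSet (segment ℝ a b) := hsegcpt.isClosed.measurableSet
  have hLHS : (∫ x in segment ℝ a b, (v x) ^ 2 ∂μH[1])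
      = (∫⁻ x in segment ℝ a b, ENNReal.ofReal ((v x) ^ 2) ∂μH[1]).toReal := by
    rw [integral_eq_lintegral_of_nonneg_ae (ae_of_all _ fun x => sq_nonneg (v x))
      (((hvcont.mono (hsegT.trans hTU)).pow 2).aestronglyMeasurable hsegmeas)]
  set I0 := ∫⁻ x in segment ℝ a b, ENNReal.ofReal ((v x) ^ 2) ∂μH[1] with hI0def
  -- integrability on `T`
  have hvT : IntegrableOn (fun x => (v x) ^ 2) T volume :=
    ((hvcont.mono hTU).pow 2).integrableOn_compact hcpt
  have hgT : IntegrableOn (fun x => ‖gradient v x‖ ^ 2) T volume :=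
    (((hgradcont.mono hTU).norm).pow 2).integrableOn_compact hcpt
  have hFT : IntegrableOn F T volume := (hFcont.mono hTU).integrableOn_compact hcpt
  set X := ∫ x in T, (v x) ^ 2 with hXdef
  set Y := ∫ x in T, ‖gradient v x‖ ^ 2 with hYdef
  have hX0 : 0 ≤ X := setIntegral_nonneg hTmeas (fun x _ => sq_nonneg _)
  have hY0 : 0 ≤ Y := setIntegral_nonneg hTmeas (fun x _ => sq_nonneg _)
  have hR : ∫ x in T, F x = 3 * X + h ^ 2 * Y := by
    rw [hF, hXdef, hYdef]
    rw [integral_add (hvT.const_mul 3) (hgT.const_mul (h ^ 2))]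
    simp only [← smul_eq_mul]
    rw [integral_smul, integral_smul]
  have hTlin : ∫⁻ x in T, ENNReal.ofReal (F x) = ENNReal.ofReal (3 * X + h ^ 2 * Y) := by
    rw [← hR, ofReal_integral_eq_lintegral_ofReal hFT (ae_of_all _ hFnonneg)]
  -- step A: reduce the segment integral to an integral over `[0,1]`
  have hA : I0 = (nndist a b : ℝ≥0∞)
      * ∫⁻ θ in Set.Icc (0:ℝ) 1, ENNReal.ofReal ((v (a + θ • c)) ^ 2) := by
    have := seg_lintegral a b hab (fun x => ENNReal.ofReal ((v x) ^ 2))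
    rw [← hc] at this
    exact this
  have hmono1 : (∫⁻ θ in Set.Icc (0:ℝ) 1, ENNReal.ofReal ((v (a + θ • c)) ^ 2))
      ≤ ∫⁻ s in Set.Icc (0:ℝ) 1, ∫⁻ t in Set.Ioc (0:ℝ) 1,
          ENNReal.ofReal (t * F (p + (t • u + (s * t) • c))) :=
    lintegral_mono_ae ((ae_restrict_iff' measurableSet_Icc).2 (ae_of_all _ key1))
  -- Fubini
  have hGmeas : AEMeasurable
      (fun q : ℝ × ℝ => ENNReal.ofReal (q.2 * F (p + (q.2 • u + (q.1 * q.2) • c))))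
      (((volume : Measure ℝ).restrict (Set.Icc 0 1)).prod
        ((volume : Measure ℝ).restrict (Set.Ioc 0 1))) := by
    have hcont : ContinuousOn
        (fun q : ℝ × ℝ => ENNReal.ofReal (q.2 * F (p + (q.2 • u + (q.1 * q.2) • c))))
        (Set.Icc 0 1 ×ˢ Set.Icc 0 1) := by
      apply ENNReal.continuous_ofReal.comp_continuousOn
      apply ContinuousOn.mul continuous_snd.continuousOn
      exact hFcont.comp (by fun_prop) (fun q hq => hTU (hΦmem q.1 q.2 hq.1 hq.2))
    have h1 := hcont.aemeasurable (μ := (volume : Measure (ℝ × ℝ)))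
      (measurableSet_Icc.prod measurableSet_Icc)
    apply h1.mono_measure
    rw [Measure.prod_restrict, Measure.volume_eq_prod]
    exact Measure.restrict_mono (Set.prod_mono subset_rfl Set.Ioc_subset_Icc_self) le_rfl
  have hFub : (∫⁻ s in Set.Icc (0:ℝ) 1, ∫⁻ t in Set.Ioc (0:ℝ) 1,
        ENNReal.ofReal (t * F (p + (t • u + (s * t) • c))))
      = ∫⁻ x in S, ENNReal.ofReal (x 1 * F (Φ x)) := by
    rw [hSdef]
    exact (box_fubini measurableSet_Icc measurableSet_Ioc
      (fun x => ENNReal.ofReal (x 1 * F (Φ x))) hGmeas).symm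
  set J := ∫⁻ x in S, ENNReal.ofReal (x 1 * F (Φ x)) with hJdef
  -- change of variables
  have hCOV := lintegral_image_eq_lintegral_abs_det_fderiv_mul (volume : Measure E2) hSmeas
      (fun x _ => (hΦderiv x).hasFDerivWithinAt) hinj (fun y => ENNReal.ofReal (F y))
  have hJ : ENNReal.ofReal |D| * J ≤ ENNReal.ofReal (3 * X + h ^ 2 * Y) := by
    rw [hJdef, ← lintegral_const_mul' _ _ ENNReal.ofReal_ne_top]
    have hcongr : (∫⁻ x in S, ENNReal.ofReal |D| * ENNReal.ofReal (x 1 * F (Φ x)))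
        = ∫⁻ x in S, ENNReal.ofReal |(f' x).det| * ENNReal.ofReal (F (Φ x)) := by
      apply setLIntegral_congr_fun hSmeas
      intro x hx
      have hx1 : (0:ℝ) < x 1 := hx.2.1
      beta_reduce
      rw [hdet x, abs_mul, abs_of_pos hx1,
        ← ENNReal.ofReal_mul (abs_nonneg D),
        ← ENNReal.ofReal_mul (by positivity : (0:ℝ) ≤ x 1 * |D|)]
      congr 1
      ring
    rw [hcongr, ← hCOV]
    calc (∫⁻ y in Φ '' S, ENNReal.ofReal (F y))
        ≤ ∫⁻ y in T, ENNReal.ofReal (F y) := lintegral_mono_set hΦST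
      _ = ENNReal.ofReal (3 * X + h ^ 2 * Y) := hTlin
  -- put everything together
  have hdistab : dist a b ≤ h := hh ▸ Metric.dist_le_diam_of_mem hbdd haT hbT
  have hnd : (nndist a b : ℝ≥0∞) ≤ ENNReal.ofReal h := by
    rw [← edist_nndist, edist_dist]
    exact ENNReal.ofReal_le_ofReal hdistab
  have hchain : ENNReal.ofReal (ρ ^ 2 * h ^ 2) * I0
      ≤ ENNReal.ofReal (ρ ^ 2 * h ^ 2)
          * ENNReal.ofReal ((3 / ρ ^ 2) * (h⁻¹ * X + h * Y)) := by
    calc ENNReal.ofReal (ρ ^ 2 * h ^ 2) * I0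
        ≤ ENNReal.ofReal (ρ ^ 2 * h ^ 2) * (ENNReal.ofReal h * J) := by
          apply mul_le_mul_right
          rw [hA]
          exact mul_le_mul' hnd (hmono1.trans (le_of_eq hFub))
      _ = ENNReal.ofReal h * (ENNReal.ofReal (ρ ^ 2 * h ^ 2) * J) := by ring
      _ ≤ ENNReal.ofReal h * (ENNReal.ofReal |D| * J) :=
          mul_le_mul_right (mul_le_mul_left (ENNReal.ofReal_le_ofReal hDlow) J) _
      _ ≤ ENNReal.ofReal h * ENNReal.ofReal (3 * X + h ^ 2 * Y) := mul_le_mul_right hJ _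
      _ = ENNReal.ofReal (h * (3 * X + h ^ 2 * Y)) := (ENNReal.ofReal_mul hhpos.le).symm
      _ ≤ ENNReal.ofReal (ρ ^ 2 * h ^ 2 * ((3 / ρ ^ 2) * (h⁻¹ * X + h * Y))) := by
          apply ENNReal.ofReal_le_ofReal
          have hid : ρ ^ 2 * h ^ 2 * ((3 / ρ ^ 2) * (h⁻¹ * X + h * Y))
              = 3 * h * X + 3 * h ^ 3 * Y := by
            field_simp
          rw [hid]
          nlinarith [hY0, hhpos, mul_nonneg (mul_nonneg (by norm_num : (0:ℝ) ≤ 2) (pow_pos hhpos 3).le) hY0]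
      _ = ENNReal.ofReal (ρ ^ 2 * h ^ 2) * ENNReal.ofReal ((3 / ρ ^ 2) * (h⁻¹ * X + h * Y)) :=
          ENNReal.ofReal_mul (by positivity)
  have hI0 : I0 ≤ ENNReal.ofReal ((3 / ρ ^ 2) * (h⁻¹ * X + h * Y)) := by
    have hne0 : ENNReal.ofReal (ρ ^ 2 * h ^ 2) ≠ 0 := by
      rw [Ne, ENNReal.ofReal_eq_zero, not_le]
      positivity
    exact (ENNReal.mul_le_mul_iff_right hne0 ENNReal.ofReal_ne_top).1 hchain
  rw [hLHS]
  exact ENNReal.toReal_le_of_le_ofReal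
    (mul_nonneg (by positivity) (add_nonneg (mul_nonneg (by positivity) hX0)
      (mul_nonneg hhpos.le hY0))) hI0

/-- Scaled trace inequality on an edge (Lemma 5.1, third estimate): for every
shape-regularity parameter `ρ > 0` there is a constant `C₂ > 0` such that for every
triangle `T` with affinely independent vertices `A 0, A 1, A 2`, of diameter `h`,
containing a closed ball of radius `ρ * h`, every edge `e = segment ℝ (A i) (A j)`
(`i ≠ j`) of `T`, and every function `v` continuously differentiable on an open
neighborhood of `T`,
`∫_e v² dℋ¹ ≤ C₂ (h⁻¹ ∫_T v² + h ∫_T ‖∇v‖²)`. -/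
theorem stmt_5 (ρ : ℝ) (hρ : 0 < ρ) :
    ∃ C₂ > (0 : ℝ),
      ∀ A : Fin 3 → EuclideanSpace ℝ (Fin 2),
        AffineIndependent ℝ A →
        ∀ T : Set (EuclideanSpace ℝ (Fin 2)), T = convexHull ℝ (Set.range A) →
        ∀ h : ℝ, h = Metric.diam T →
        (∃ z, Metric.closedBall z (ρ * h) ⊆ T) →
        ∀ i j : Fin 3, i ≠ j →
        ∀ v : EuclideanSpace ℝ (Fin 2) → ℝ,
          (∃ U : Set (EuclideanSpace ℝ (Fin 2)), IsOpen U ∧ T ⊆ U ∧ ContDiffOn ℝ 1 v U) →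
          (∫ x in segment ℝ (A i) (A j), (v x) ^ 2 ∂μH[1]) ≤
            C₂ * (h⁻¹ * (∫ x in T, (v x) ^ 2) + h * ∫ x in T, ‖gradient v x‖ ^ 2) := by
  refine ⟨3 / ρ ^ 2, by positivity, ?_⟩
  rintro A hA T hT h hh hball i j hij v ⟨U, hUopen, hTU, hv⟩
  obtain ⟨k, hki, hkj, hcover⟩ : ∃ k, k ≠ i ∧ k ≠ j ∧ ∀ m : Fin 3, m = i ∨ m = j ∨ m = k := by
    revert hij; revert i j; decide
  have hab : A i ≠ A j := fun e => hij (hA.injective e)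
  have hrange : Set.range A = {A i, A j, A k} := by
    apply Set.eq_of_subset_of_subset
    · rintro x ⟨m, rfl⟩
      rcases hcover m with rfl | rfl | rfl <;> simp
    · rintro x hx
      simp only [Set.mem_insert_iff, Set.mem_singleton_iff] at hx
      rcases hx with rfl | rfl | rfl <;> exact Set.mem_range_self _
  have hhpos : 0 < h := by
    rw [hh]
    have hbdd : Bornology.IsBounded T := by
      rw [hT]; exact ((Set.finite_range A).isCompact_convexHull ℝ).isBounded
    have h1 : dist (A i) (A j) ≤ Metric.diam T :=
      Metric.dist_le_diam_of_mem hbdd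
        (hT ▸ subset_convexHull ℝ _ (Set.mem_range_self i))
        (hT ▸ subset_convexHull ℝ _ (Set.mem_range_self j))
    have h2 : 0 < dist (A i) (A j) := dist_pos.2 hab
    linarith
  exact trace_core ρ h hρ (A k) (A i) (A j) hab T (by rw [hT, hrange]) hh hhpos hball v U
    hUopen hTU hv
end

section
/- For every $\rho > 0$ there exists a constant $C > 0$ such that the following holds. Let $T$ be any triangle with vertices $A_1, A_2, A_3$, diameter $h$, containing a ball of radius $\rho h$; let $D = (1-s)A_1 + sA_2$ with $s \in (0,1)$ and $E = (1-r)A_1 + rA_3$ with $r \in (0,1)$; let the segment $\overline{DE}$ divide $T$ into $T^-$ (the subtriangle with vertex $A_1$) and $T^+$ (the part containing $A_2$ and $A_3$); let $n_{DE}$ be a unit vector orthogonal to $E - D$; let $\beta^+, \beta^- > 0$, set $\alpha = \max(\beta^+,\beta^-)/\min(\beta^+,\beta^-)$, and let $\beta : T \to \mathbb{R}$ equal $\beta^\pm$ on $T^\pm$. Let $v : T \to \mathbb{R}$ equal affine maps $p^\pm$ on $T^\pm$ with $p^+(D) = p^-(D)$, $p^+(E) = p^-(E)$, and $\beta^+ \langle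 \nabla p^+, n_{DE} \rangle = \beta^- \langle \nabla p^-, n_{DE} \rangle$. Then for every edge $e$ of $T$ with unit normal $n_e$: $h \int_e \beta \, \langle \nabla v, n_e \rangle^2 \, d\mathcal{H}^1 \le C \, \alpha \int_T \beta \, \lVert \nabla v \rVert^2 \, dx$, where $\nabla v$ equals $\nabla p^\pm$ on $T^\pm$. -/
open MeasureTheory RealInnerProductSpace


private lemma combo3_mem {x y z : EuclideanSpace ℝ (Fin 2)} {a b c : ℝ}
    (ha : 0 ≤ a) (hb : 0 ≤ b) (hc : 0 ≤ c) (habc : a + b + c = 1) :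
    a • x + b • y + c • z ∈ convexHull ℝ ({x, y, z} : Set (EuclideanSpace ℝ (Fin 2))) := by
  have := (convex_convexHull ℝ ({x, y, z} : Set (EuclideanSpace ℝ (Fin 2)))).sum_mem
    (t := Finset.univ) (w := ![a, b, c]) (z := ![x, y, z])
    (by intro i _; fin_cases i <;> simpa)
    (by simp [Fin.sum_univ_three, habc])
    (by intro i _; fin_cases i <;> exact subset_convexHull ℝ _ (by simp))
  rw [Fin.sum_univ_three] at this
  simpa using this

private lemma combo4_mem {x y z w : EuclideanSpace ℝ (Fin 2)} {a b c d : ℝ}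
    (ha : 0 ≤ a) (hb : 0 ≤ b) (hc : 0 ≤ c) (hd : 0 ≤ d) (habc : a + b + c + d = 1) :
    a • x + b • y + c • z + d • w ∈
      convexHull ℝ ({x, y, z, w} : Set (EuclideanSpace ℝ (Fin 2))) := by
  have := (convex_convexHull ℝ ({x, y, z, w} : Set (EuclideanSpace ℝ (Fin 2)))).sum_mem
    (t := Finset.univ) (w := ![a, b, c, d]) (z := ![x, y, z, w])
    (by intro i _; fin_cases i <;> simpa)
    (by simp [Fin.sum_univ_four, habc])
    (by intro i _; fin_cases i <;> exact subset_convexHull ℝ _ (by simp))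
  rw [Fin.sum_univ_four] at this
  simpa using this
set_option maxHeartbeats 1000000 in
private lemma cover_lemma {A₁ A₂ A₃ D E : EuclideanSpace ℝ (Fin 2)} {s r : ℝ}
    (hs : s ∈ Set.Ioo (0:ℝ) 1) (hr : r ∈ Set.Ioo (0:ℝ) 1)
    (hD : D = (1 - s) • A₁ + s • A₂) (hE : E = (1 - r) • A₁ + r • A₃) :
    convexHull ℝ ({A₁, A₂, A₃} : Set (EuclideanSpace ℝ (Fin 2))) ⊆
      convexHull ℝ ({A₁, D, E} : Set (EuclideanSpace ℝ (Fin 2))) ∪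
      convexHull ℝ ({A₂, A₃, D, E} : Set (EuclideanSpace ℝ (Fin 2))) := by
  intro x hx
  obtain ⟨hs0, hs1⟩ := hs
  obtain ⟨hr0, hr1⟩ := hr
  rw [show ({A₁, A₂, A₃} : Set (EuclideanSpace ℝ (Fin 2))) = insert A₁ {A₂, A₃} from rfl,
    convexHull_insert ⟨A₂, by simp⟩, mem_convexJoin] at hx
  obtain ⟨a₁, ha₁, z, hz, hxz⟩ := hx
  rw [convexHull_pair] at hz
  rw [Set.mem_singleton_iff] at ha₁
  subst ha₁
  obtain ⟨p, q, hp, hq, hpq, rfl⟩ := hz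
  obtain ⟨a, t, ha, ht, hat, rfl⟩ := hxz
  have hb0 : 0 ≤ t * p := mul_nonneg ht hp
  have hc0 : 0 ≤ t * q := mul_nonneg ht hq
  have habc : a + t * p + t * q = 1 := by nlinarith
  have hsne : s ≠ 0 := ne_of_gt hs0
  have hrne : r ≠ 0 := ne_of_gt hr0
  by_cases hcase : t * p / s + t * q / r ≤ 1
  · left
    have h1 : (0:ℝ) ≤ 1 - t * p / s - t * q / r := by linarith
    have h2 : (0:ℝ) ≤ t * p / s := div_nonneg hb0 hs0.le
    have h3 : (0:ℝ) ≤ t * q / r := div_nonneg hc0 hr0.le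
    have hxeq : a • a₁ + t • (p • A₂ + q • A₃) =
        (1 - t * p / s - t * q / r) • a₁ + (t * p / s) • D + (t * q / r) • E := by
      rw [hD, hE]
      match_scalars
      · field_simp
        linear_combination (s * r) * habc
      · field_simp
      · field_simp
    rw [hxeq]
    exact combo3_mem h1 h2 h3 (by ring)
  · right
    push_neg at hcase
    have hble : t * p ≤ t * p / s := by
      rw [le_div_iff₀ hs0]; nlinarith
    have hcle : t * q ≤ t * q / r := by
      rw [le_div_iff₀ hr0]; nlinarith
    have hdnm0 : 0 < t * p / s + t * q / r - t * p - t * q := by nlinarith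
    obtain ⟨θ, hθ0, hθ1, hθd⟩ :
        ∃ θ : ℝ, 0 ≤ θ ∧ θ ≤ 1 ∧ θ * (t * p / s + t * q / r - t * p - t * q) = a := by
      refine ⟨a / (t * p / s + t * q / r - t * p - t * q), div_nonneg ha hdnm0.le, ?_, ?_⟩
      · rw [div_le_one hdnm0]; linarith
      · exact div_mul_cancel₀ a hdnm0.ne'
    have hpps : θ * (t * p / s) * s = θ * (t * p) := by field_simp
    have hqqs : θ * (t * q / r) * r = θ * (t * q) := by field_simp
    have huu0 : 0 ≤ θ * (t * p / s) := mul_nonneg hθ0 (div_nonneg hb0 hs0.le)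
    have hww0 : 0 ≤ θ * (t * q / r) := mul_nonneg hθ0 (div_nonneg hc0 hr0.le)
    have hpp0 : 0 ≤ t * p - θ * (t * p / s) * s := by rw [hpps]; nlinarith
    have hqq0 : 0 ≤ t * q - θ * (t * q / r) * r := by rw [hqqs]; nlinarith
    have hsum : (t * p - θ * (t * p / s) * s) + (t * q - θ * (t * q / r) * r) +
        θ * (t * p / s) + θ * (t * q / r) = 1 := by
      rw [hpps, hqqs]
      linear_combination hθd + habc
    have hxeq : a • a₁ + t • (p • A₂ + q • A₃) =
        (t * p - θ * (t * p / s) * s) • A₂ + (t * q - θ * (t * q / r) * r) • A₃ +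
          (θ * (t * p / s)) • D + (θ * (t * q / r)) • E := by
      rw [hD, hE]
      match_scalars
      · linear_combination -hθd + hpps + hqqs
      · ring
      · ring
    rw [hxeq]
    exact combo4_mem hpp0 hqq0 huu0 hww0 hsum


private lemma ortho2 {u n w : EuclideanSpace ℝ (Fin 2)} (hu : u ≠ 0) (hn : ‖n‖ = 1)
    (hun : ⟪u, n⟫ = 0) (huw : ⟪u, w⟫ = 0) : w = ⟪w, n⟫ • n := by
  have hn2 : n 0 * n 0 + n 1 * n 1 = 1 := by
    have h : ⟪n, n⟫ = 1 := by
      rw [real_inner_self_eq_norm_mul_norm, hn]; norm_num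
    rw [PiLp.inner_apply, Fin.sum_univ_two] at h; simp at h; linear_combination h
  have hun' : u 0 * n 0 + u 1 * n 1 = 0 := by
    have h' := hun; simp [PiLp.inner_apply, Fin.sum_univ_two] at h'; linear_combination h'
  have huw' : u 0 * w 0 + u 1 * w 1 = 0 := by
    have h' := huw; simp [PiLp.inner_apply, Fin.sum_univ_two] at h'; linear_combination h'
  have hu' : u 0 ≠ 0 ∨ u 1 ≠ 0 := by
    by_contra hc
    push_neg at hc
    exact hu (by ext i; fin_cases i <;> simp [hc.1, hc.2])
  have hcross : w 0 * n 1 = w 1 * n 0 := by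
    rcases hu' with h0 | h1
    · have : u 0 * (w 0 * n 1 - w 1 * n 0) = 0 := by linear_combination n 1 * huw' - w 1 * hun'
      have := mul_eq_zero.1 this
      rcases this with h | h
      · exact absurd h h0
      · linarith
    · have : u 1 * (w 0 * n 1 - w 1 * n 0) = 0 := by linear_combination -(n 0) * huw' + w 0 * hun'
      have := mul_eq_zero.1 this
      rcases this with h | h
      · exact absurd h h1
      · linarith
  have hwn : ⟪w, n⟫ = w 0 * n 0 + w 1 * n 1 := by
    simp [PiLp.inner_apply, Fin.sum_univ_two]; ring
  ext i
  fin_cases i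
  · show w 0 = (⟪w, n⟫ • n) 0
    rw [PiLp.smul_apply, hwn, smul_eq_mul]
    linear_combination -(w 0) * hn2 + n 1 * hcross
  · show w 1 = (⟪w, n⟫ • n) 1
    rw [PiLp.smul_apply, hwn, smul_eq_mul]
    linear_combination -(w 1) * hn2 - n 0 * hcross

set_option maxHeartbeats 1000000 in
/-- Single-element form of Lemma 5.3: the `β`-weighted normal flux of a local
immersed finite element function on any edge of an interface triangle is controlled,
up to the factor `α = β_max / β_min`, by its weighted gradient energy over the
element.  The triangle `T = convexHull ℝ {A₁, A₂, A₃}` has diameter `h` and contains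
a ball of radius `ρ * h`; `D` and `E` are the interface points on the edges `A₁A₂`
and `A₁A₃`; the chord `DE` splits `T` into `Tm = convexHull ℝ {A₁, D, E}` and
`Tp = convexHull ℝ {A₂, A₃, D, E}`.  The function `v` equals the affine maps
`x ↦ ⟪gm, x⟫ + cm` on `Tm` and `x ↦ ⟪gp, x⟫ + cp` on `Tp` (continuity at `D`, `E`
and the flux jump condition across `DE` hold); `g` is its piecewise-constant
gradient and `β` the piecewise-constant coefficient.  For every edge
`segment ℝ P Q` of `T` (`P ≠ Q` vertices) with unit normal `ne`:
`h ∫_e β ⟪g, ne⟫² dℋ¹ ≤ C α ∫_T β ‖g‖²`. -/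
theorem stmt_8 (ρ : ℝ) (hρ : 0 < ρ) (βp βm : ℝ) (hβp : 0 < βp) (hβm : 0 < βm) :
    ∃ C > (0 : ℝ),
      ∀ A₁ A₂ A₃ : EuclideanSpace ℝ (Fin 2),
        AffineIndependent ℝ ![A₁, A₂, A₃] →
        ∀ T : Set (EuclideanSpace ℝ (Fin 2)), T = convexHull ℝ {A₁, A₂, A₃} →
        ∀ h : ℝ, h = Metric.diam T →
        (∃ z, Metric.closedBall z (ρ * h) ⊆ T) →
        ∀ s r : ℝ, s ∈ Set.Ioo (0 : ℝ) 1 → r ∈ Set.Ioo (0 : ℝ) 1 →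
        ∀ D E : EuclideanSpace ℝ (Fin 2),
          D = (1 - s) • A₁ + s • A₂ →
          E = (1 - r) • A₁ + r • A₃ →
        ∀ Tm Tp : Set (EuclideanSpace ℝ (Fin 2)),
          Tm = convexHull ℝ {A₁, D, E} →
          Tp = convexHull ℝ {A₂, A₃, D, E} →
        ∀ nDE : EuclideanSpace ℝ (Fin 2), ‖nDE‖ = 1 → ⟪E - D, nDE⟫ = 0 →
        ∀ α : ℝ, α = max βp βm / min βp βm →
        ∀ β : EuclideanSpace ℝ (Fin 2) → ℝ,
          (∀ x ∈ Tm, β x = βm) → (∀ x ∈ Tp \ Tm, β x = βp) →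
        ∀ gm gp : EuclideanSpace ℝ (Fin 2), ∀ cm cp : ℝ,
          ⟪gp, D⟫ + cp = ⟪gm, D⟫ + cm →
          ⟪gp, E⟫ + cp = ⟪gm, E⟫ + cm →
          βp * ⟪gp, nDE⟫ = βm * ⟪gm, nDE⟫ →
        ∀ v : EuclideanSpace ℝ (Fin 2) → ℝ,
          (∀ x ∈ Tm, v x = ⟪gm, x⟫ + cm) →
          (∀ x ∈ Tp, v x = ⟪gp, x⟫ + cp) →
        ∀ g : EuclideanSpace ℝ (Fin 2) → EuclideanSpace ℝ (Fin 2),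
          (∀ x ∈ Tm, g x = gm) →
          (∀ x ∈ Tp \ Tm, g x = gp) →
        ∀ P Q : EuclideanSpace ℝ (Fin 2),
          ({P, Q} : Set (EuclideanSpace ℝ (Fin 2))) ⊆ {A₁, A₂, A₃} → P ≠ Q →
        ∀ ne : EuclideanSpace ℝ (Fin 2), ‖ne‖ = 1 → ⟪Q - P, ne⟫ = 0 →
          h * (∫ x in segment ℝ P Q, β x * ⟪g x, ne⟫ ^ 2 ∂μH[1]) ≤
            C * α * ∫ x in T, β x * ‖g x‖ ^ 2 := by
  have hmn : 0 < min βp βm := lt_min hβp hβm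
  have hmx : 0 < max βp βm := lt_max_of_lt_left hβp
  have hmnmx : min βp βm ≤ max βp βm := min_le_max
  have hπ : (0:ℝ) < Real.pi := Real.pi_pos
  refine ⟨(max βp βm) ^ 2 / ((min βp βm) ^ 2 * (Real.pi * ρ ^ 2)), by positivity, ?_⟩
  set mn := min βp βm
  set mx := max βp βm
  set C : ℝ := mx ^ 2 / (mn ^ 2 * (Real.pi * ρ ^ 2)) with hCdef
  intro A₁ A₂ A₃ hAI T hT h hh hball s r hsIoo hrIoo D E hD hE Tm Tp hTm hTp nDE hnDE
    hEDn α hα β hβTm hβTp gm gp cm cp hcD hcE hflux v hvm hvp g hgTm hgTp P Q hPQv hPQne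
    ne hne hQPn
  classical
  obtain ⟨z, hz⟩ := hball
  -- basic facts about T
  have hTconv : Convex ℝ T := by rw [hT]; exact convex_convexHull ℝ _
  have hTcomp : IsCompact T := by
    rw [hT]; exact (Set.toFinite _).isCompact_convexHull ℝ
  have hTmeas : MeasurableSet T := hTcomp.isClosed.measurableSet
  have hTmmeas : MeasurableSet Tm := by
    rw [hTm]; exact ((Set.toFinite _).isCompact_convexHull ℝ).isClosed.measurableSet
  have hcover : T ⊆ Tm ∪ Tp := by
    rw [hT, hTm, hTp]; exact cover_lemma hsIoo hrIoo hD hE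
  have h0 : 0 ≤ h := by rw [hh]; exact Metric.diam_nonneg
  -- E - D ≠ 0
  have hED : E - D ≠ 0 := by
    intro h0'
    have hsum0 : (Finset.univ : Finset (Fin 3)).sum (fun i => ![s - r, -s, r] i) = 0 := by
      simp [Fin.sum_univ_three]; ring
    have hvec : ∑ i : Fin 3, ![s - r, -s, r] i • ![A₁, A₂, A₃] i = 0 := by
      have h2 : (s - r) • A₁ + -(s • A₂) + r • A₃ = E - D := by
        rw [hD, hE]; module
      simp only [Fin.sum_univ_three, Matrix.cons_val_zero, Matrix.cons_val_one,
        Matrix.head_cons, Matrix.cons_val_two, Matrix.tail_cons, neg_smul]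
      rw [h2, h0']
    have := affineIndependent_iff.1 hAI Finset.univ ![s - r, -s, r] hsum0 hvec 1
      (Finset.mem_univ _)
    simp at this
    exact absurd this hsIoo.1.ne'
  -- gradient decomposition
  have hwu : ⟪E - D, gp - gm⟫ = 0 := by
    have h1 : ⟪E - D, gp - gm⟫ = (⟪gp, E⟫ - ⟪gm, E⟫) - (⟪gp, D⟫ - ⟪gm, D⟫) := by
      rw [real_inner_comm]
      simp only [inner_sub_left, inner_sub_right]
      try ring
    rw [h1]; linarith
  have hdecomp : gp - gm = ⟪gp - gm, nDE⟫ • nDE := ortho2 hED hnDE hEDn hwu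
  set bm : ℝ := ⟪gm, nDE⟫ with hbm
  set bp : ℝ := ⟪gp, nDE⟫ with hbp
  set am : EuclideanSpace ℝ (Fin 2) := gm - bm • nDE with ham
  have hamn : ⟪am, nDE⟫ = 0 := by
    rw [ham, inner_sub_left, real_inner_smul_left, real_inner_self_eq_norm_mul_norm, hnDE]
    try ring
  have hgm_eq : gm = am + bm • nDE := by rw [ham]; abel
  have hgp_eq : gp = am + bp • nDE := by
    have h1 : gp = gm + (gp - gm) := by abel
    have h2 : ⟪gp - gm, nDE⟫ = bp - bm := by
      rw [inner_sub_left]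
    rw [h1, hdecomp, h2, hgm_eq]
    module
  have hpy : ∀ (b : ℝ), ‖am + b • nDE‖ ^ 2 = ‖am‖ ^ 2 + b ^ 2 := by
    intro b
    rw [norm_add_sq_real, real_inner_smul_right, hamn, norm_smul, hnDE]
    simp [sq_abs]
  have hnm : ‖gm‖ ^ 2 = ‖am‖ ^ 2 + bm ^ 2 := by rw [hgm_eq, hpy]
  have hnp : ‖gp‖ ^ 2 = ‖am‖ ^ 2 + bp ^ 2 := by rw [hgp_eq, hpy]
  -- flux relation: bp² mn² ≤ bm² mx² and bm² mn² ≤ bp² mx²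
  have hfl2 : βp ^ 2 * bp ^ 2 = βm ^ 2 * bm ^ 2 := by
    have h1 : (βp * bp) ^ 2 = (βm * bm) ^ 2 := by rw [hflux]
    linear_combination h1
  have hbp2 : bp ^ 2 * mn ^ 2 ≤ bm ^ 2 * mx ^ 2 := by
    have q1 : mn ^ 2 ≤ βp ^ 2 := pow_le_pow_left₀ hmn.le (min_le_left _ _) 2
    have q2 : βm ^ 2 ≤ mx ^ 2 := pow_le_pow_left₀ hβm.le (le_max_right _ _) 2
    have e1 : bp ^ 2 * mn ^ 2 ≤ bp ^ 2 * βp ^ 2 :=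
      mul_le_mul_of_nonneg_left q1 (sq_nonneg bp)
    have e2 : bm ^ 2 * βm ^ 2 ≤ bm ^ 2 * mx ^ 2 :=
      mul_le_mul_of_nonneg_left q2 (sq_nonneg bm)
    have e3 : bp ^ 2 * βp ^ 2 = bm ^ 2 * βm ^ 2 := by linear_combination hfl2
    linarith
  have hbm2 : bm ^ 2 * mn ^ 2 ≤ bp ^ 2 * mx ^ 2 := by
    have q1 : mn ^ 2 ≤ βm ^ 2 := pow_le_pow_left₀ hmn.le (min_le_right _ _) 2
    have q2 : βp ^ 2 ≤ mx ^ 2 := pow_le_pow_left₀ hβp.le (le_max_left _ _) 2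
    have e1 : bm ^ 2 * mn ^ 2 ≤ bm ^ 2 * βm ^ 2 :=
      mul_le_mul_of_nonneg_left q1 (sq_nonneg bm)
    have e2 : bp ^ 2 * βp ^ 2 ≤ bp ^ 2 * mx ^ 2 :=
      mul_le_mul_of_nonneg_left q2 (sq_nonneg bp)
    have e3 : bm ^ 2 * βm ^ 2 = bp ^ 2 * βp ^ 2 := by linear_combination -hfl2
    linarith
  set m2 : ℝ := min (‖gm‖ ^ 2) (‖gp‖ ^ 2) with hm2
  have hm20 : 0 ≤ m2 := le_min (sq_nonneg _) (sq_nonneg _)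
  have hα1 : 1 ≤ α := by rw [hα]; exact (one_le_div hmn).2 hmnmx
  have hα0 : 0 < α := lt_of_lt_of_le one_pos hα1
  have hαmx : α * mn = mx := by rw [hα]; field_simp
  have hα2 : 1 ≤ α ^ 2 := one_le_pow₀ hα1
  have hmx2 : mx ^ 2 = α ^ 2 * mn ^ 2 := by rw [← hαmx]; ring
  have hbmle : bm ^ 2 ≤ α ^ 2 * bp ^ 2 := by
    have hc : bm ^ 2 * mn ^ 2 ≤ (α ^ 2 * bp ^ 2) * mn ^ 2 := by
      calc bm ^ 2 * mn ^ 2 ≤ bp ^ 2 * mx ^ 2 := hbm2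
        _ = (α ^ 2 * bp ^ 2) * mn ^ 2 := by rw [hmx2]; ring
    exact le_of_mul_le_mul_right hc (pow_pos hmn 2)
  have hbple : bp ^ 2 ≤ α ^ 2 * bm ^ 2 := by
    have hc : bp ^ 2 * mn ^ 2 ≤ (α ^ 2 * bm ^ 2) * mn ^ 2 := by
      calc bp ^ 2 * mn ^ 2 ≤ bm ^ 2 * mx ^ 2 := hbp2
        _ = (α ^ 2 * bm ^ 2) * mn ^ 2 := by rw [hmx2]; ring
    exact le_of_mul_le_mul_right hc (pow_pos hmn 2)
  have hkey : max (‖gm‖ ^ 2) (‖gp‖ ^ 2) ≤ α ^ 2 * m2 := by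
    have hama : ‖am‖ ^ 2 ≤ α ^ 2 * ‖am‖ ^ 2 := le_mul_of_one_le_left (sq_nonneg _) hα2
    have hgm_le : ‖gm‖ ^ 2 ≤ α ^ 2 * ‖gp‖ ^ 2 := by
      rw [hnm, hnp, mul_add]
      exact add_le_add hama hbmle
    have hgp_le : ‖gp‖ ^ 2 ≤ α ^ 2 * ‖gm‖ ^ 2 := by
      rw [hnm, hnp, mul_add]
      exact add_le_add hama hbple
    rw [hm2]
    rcases le_total (‖gm‖ ^ 2) (‖gp‖ ^ 2) with hc | hc
    · rw [max_eq_right hc, min_eq_left hc]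
      exact hgp_le
    · rw [max_eq_left hc, min_eq_right hc]
      exact hgm_le
  -- vertices in T
  have hPT : P ∈ T := by
    rw [hT]; exact subset_convexHull ℝ _ (hPQv (by simp))
  have hQT : Q ∈ T := by
    rw [hT]; exact subset_convexHull ℝ _ (hPQv (by simp))
  have hsegT : segment ℝ P Q ⊆ T := hTconv.segment_subset hPT hQT
  -- the edge integral bound
  set M : ℝ := mx * (α ^ 2 * m2) with hM
  have hM0 : 0 ≤ M := by positivity
  have hsegmeas : MeasurableSet (segment ℝ P Q) := by
    rw [← convexHull_pair]
    exact ((Set.toFinite _).isCompact_convexHull ℝ).isClosed.measurableSet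
  have hvals : ∀ x ∈ T, (β x = βm ∧ g x = gm) ∨ (β x = βp ∧ g x = gp) := by
    intro x hx
    rcases hcover hx with hxm | hxp
    · exact Or.inl ⟨hβTm x hxm, hgTm x hxm⟩
    · by_cases hxm : x ∈ Tm
      · exact Or.inl ⟨hβTm x hxm, hgTm x hxm⟩
      · exact Or.inr ⟨hβTp x ⟨hxp, hxm⟩, hgTp x ⟨hxp, hxm⟩⟩
  have hintval : ∀ x ∈ T, ‖β x * ⟪g x, ne⟫ ^ 2‖ ≤ M := by
    intro x hx
    have hb : ∀ (b : ℝ) (w : EuclideanSpace ℝ (Fin 2)), 0 < b → b ≤ mx →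
        ‖w‖ ^ 2 ≤ α ^ 2 * m2 → ‖b * ⟪w, ne⟫ ^ 2‖ ≤ M := by
      intro b w hb0 hbmx hw
      have h1 : ⟪w, ne⟫ ^ 2 ≤ ‖w‖ ^ 2 := by
        have hique := abs_real_inner_le_norm w ne
        rw [hne, mul_one] at hique
        calc ⟪w, ne⟫ ^ 2 = |⟪w, ne⟫| ^ 2 := (sq_abs _).symm
          _ ≤ ‖w‖ ^ 2 := pow_le_pow_left₀ (abs_nonneg _) hique 2
      have h2 : 0 ≤ b * ⟪w, ne⟫ ^ 2 := mul_nonneg hb0.le (sq_nonneg _)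
      rw [Real.norm_eq_abs, abs_of_nonneg h2, hM]
      calc b * ⟪w, ne⟫ ^ 2 ≤ b * ‖w‖ ^ 2 := mul_le_mul_of_nonneg_left h1 hb0.le
        _ ≤ b * (α ^ 2 * m2) := mul_le_mul_of_nonneg_left hw hb0.le
        _ ≤ mx * (α ^ 2 * m2) :=
            mul_le_mul_of_nonneg_right hbmx (mul_nonneg (sq_nonneg α) hm20)
    rcases hvals x hx with ⟨h1, h2⟩ | ⟨h1, h2⟩
    · rw [h1, h2]
      exact hb βm gm hβm (le_max_right _ _)
        (le_trans (le_trans (le_max_left _ _) hkey) le_rfl)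
    · rw [h1, h2]
      exact hb βp gp hβp (le_max_left _ _)
        (le_trans (le_trans (le_max_right _ _) hkey) le_rfl)
  have hμseg : μH[1] (segment ℝ P Q) = edist P Q := hausdorffMeasure_segment P Q
  haveI hfin : IsFiniteMeasure ((μH[1] : Measure (EuclideanSpace ℝ (Fin 2))).restrict
      (segment ℝ P Q)) := by
    constructor
    rw [Measure.restrict_apply_univ, hμseg]
    exact edist_lt_top P Q
  have hedge : (∫ x in segment ℝ P Q, β x * ⟪g x, ne⟫ ^ 2 ∂μH[1]) ≤ M * h := by
    have hbd : ∀ᵐ x ∂((μH[1] : Measure (EuclideanSpace ℝ (Fin 2))).restrict (segment ℝ P Q)),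
        ‖β x * ⟪g x, ne⟫ ^ 2‖ ≤ M := by
      refine (ae_restrict_mem hsegmeas).mono fun x hx => ?_
      exact hintval x (hsegT hx)
    have := norm_integral_le_of_norm_le_const hbd
      (f := fun x => β x * ⟪g x, ne⟫ ^ 2)
    have hmeasval : (((μH[1] : Measure (EuclideanSpace ℝ (Fin 2))).restrict
        (segment ℝ P Q)) Set.univ).toReal = dist P Q := by
      rw [Measure.restrict_apply_univ, hμseg, edist_dist, ENNReal.toReal_ofReal dist_nonneg]
    rw [measureReal_def, hmeasval] at this
    calc (∫ x in segment ℝ P Q, β x * ⟪g x, ne⟫ ^ 2 ∂μH[1])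
        ≤ ‖∫ x in segment ℝ P Q, β x * ⟪g x, ne⟫ ^ 2 ∂μH[1]‖ := Real.le_norm_self _
      _ ≤ M * dist P Q := this
      _ ≤ M * h := by
          refine mul_le_mul_of_nonneg_left ?_ hM0
          rw [hh]
          exact Metric.dist_le_diam_of_mem hTcomp.isBounded hPT hQT
  -- RHS lower bound
  set φ : EuclideanSpace ℝ (Fin 2) → ℝ :=
    fun x => if x ∈ Tm then βm * ‖gm‖ ^ 2 else βp * ‖gp‖ ^ 2 with hφ
  have hcongr : (∫ x in T, β x * ‖g x‖ ^ 2) = ∫ x in T, φ x := by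
    refine setIntegral_congr_fun hTmeas fun x hx => ?_
    by_cases hxm : x ∈ Tm
    · rw [hφ]
      simp only [hxm, if_true]
      rw [hβTm x hxm, hgTm x hxm]
    · have hxp : x ∈ Tp \ Tm := ⟨(hcover hx).resolve_left hxm, hxm⟩
      rw [hφ]
      simp only [hxm, if_false]
      rw [hβTp x hxp, hgTp x hxp]
  have hvolT : volume T ≠ ⊤ := hTcomp.measure_lt_top.ne
  have hφint : IntegrableOn φ T := by
    refine Measure.integrableOn_of_bounded hvolT ?_
      (M := max (βm * ‖gm‖ ^ 2) (βp * ‖gp‖ ^ 2)) ?_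
    · exact (Measurable.ite hTmmeas measurable_const measurable_const).aestronglyMeasurable
    · refine Filter.Eventually.of_forall fun x => ?_
      rw [hφ]
      by_cases hxm : x ∈ Tm
      · simp only [hxm, if_true]
        rw [Real.norm_eq_abs, abs_of_nonneg (by positivity)]
        exact le_max_left _ _
      · simp only [hxm, if_false]
        rw [Real.norm_eq_abs, abs_of_nonneg (by positivity)]
        exact le_max_right _ _
  have hφlow : ∀ x ∈ T, mn * m2 ≤ φ x := by
    intro x _
    rw [hφ]
    by_cases hxm : x ∈ Tm
    · simp only [hxm, if_true]
      have h1 : mn ≤ βm := min_le_right _ _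
      have h2 : m2 ≤ ‖gm‖ ^ 2 := min_le_left _ _
      exact mul_le_mul h1 h2 hm20 hβm.le
    · simp only [hxm, if_false]
      have h1 : mn ≤ βp := min_le_left _ _
      have h2 : m2 ≤ ‖gp‖ ^ 2 := min_le_right _ _
      exact mul_le_mul h1 h2 hm20 hβp.le
  have hlow : mn * m2 * (volume T).toReal ≤ ∫ x in T, φ x :=
    setIntegral_ge_of_const_le_real hTmeas hvolT hφlow hφint
  -- volume lower bound
  have hvol : Real.pi * ρ ^ 2 * h ^ 2 ≤ (volume T).toReal := by
    have h1 : volume (Metric.closedBall z (ρ * h)) ≤ volume T := measure_mono hz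
    have h2 : volume (Metric.closedBall z (ρ * h)) =
        ENNReal.ofReal ((ρ * h) ^ 2 * Real.pi) := by
      rw [EuclideanSpace.volume_closedBall]
      have hcard : (Fintype.card (Fin 2) : ℝ) = 2 := by simp
      rw [show Fintype.card (Fin 2) = 2 from rfl]
      rw [show ((2:ℕ) : ℝ) / 2 + 1 = 2 by norm_num, Real.Gamma_two]
      rw [Real.sq_sqrt Real.pi_pos.le]
      rw [← ENNReal.ofReal_pow (by positivity), ← ENNReal.ofReal_mul (by positivity)]
      norm_num
    calc Real.pi * ρ ^ 2 * h ^ 2 = (ρ * h) ^ 2 * Real.pi := by ring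
      _ = (volume (Metric.closedBall z (ρ * h))).toReal := by
          rw [h2, ENNReal.toReal_ofReal (by positivity)]
      _ ≤ (volume T).toReal := ENNReal.toReal_mono hvolT h1
  -- combine
  have hCα0 : 0 ≤ C * α * (mn * m2) := by positivity
  have heq : M * h ^ 2 = C * α * (mn * m2) * (Real.pi * ρ ^ 2 * h ^ 2) := by
    rw [hM, hCdef, hα]
    field_simp
  calc h * (∫ x in segment ℝ P Q, β x * ⟪g x, ne⟫ ^ 2 ∂μH[1])
      ≤ h * (M * h) := by
        refine mul_le_mul_of_nonneg_left hedge h0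
    _ = M * h ^ 2 := by ring
    _ = C * α * (mn * m2) * (Real.pi * ρ ^ 2 * h ^ 2) := heq
    _ ≤ C * α * (mn * m2) * (volume T).toReal := by
        refine mul_le_mul_of_nonneg_left hvol hCα0
    _ = C * α * (mn * m2 * (volume T).toReal) := by ring
    _ ≤ C * α * ∫ x in T, φ x := by
        refine mul_le_mul_of_nonneg_left hlow (by positivity)
    _ = C * α * ∫ x in T, β x * ‖g x‖ ^ 2 := by rw [hcongr]
end
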